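/- Let R be a commutative ring and M an R-module, and let R(+)M denote the idealization of M over R. An element (x, m) ∈ R(+)M is a non-zerodivisor of R(+)M if and only if x is a non-zerodivisor on M and Ann_R(x) ∩ Ann_R(m) = (0). Moreover, (x, m) is a unit of R(+)M if and only if x is a unit of R. -/

import Mathlib

open TrivSqZeroExt

/-- In the idealization `R(+)M`, an element `(x, m)` is a
non-zerodivisor iff `x` is a non-zerodivisor on `M` and `Ann_R(x) ∩ Ann_R(m) = (0)`;
and `(x, m)` is a unit iff `x` is a unit of `R`. -/
theorem idealization_nonZeroDivisor_and_isUnit_iff (R M : Type*) [CommRing R]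
    [AddCommGroup M] [Module R M] [Module Rᵐᵒᵖ M] [IsCentralScalar R M] (x : R) (m : M) :
    ((inl x + inr m : TrivSqZeroExt R M) ∈ nonZeroDivisors (TrivSqZeroExt R M) ↔
      ((∀ m' : M, x • m' = 0 → m' = 0) ∧
        ∀ a : R, a * x = 0 → a • m = 0 → a = 0)) ∧
    (IsUnit (inl x + inr m : TrivSqZeroExt R M) ↔ IsUnit x) := by
  have hfst : (inl x + inr m : TrivSqZeroExt R M).fst = x := by simp
  have hsnd : (inl x + inr m : TrivSqZeroExt R M).snd = m := by simp
  constructor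
  · constructor
    · intro h
      constructor
      · intro m' hm'
        have := mem_nonZeroDivisors_iff_right.1 h (inr m') ?_
        · simpa using congrArg snd this
        · ext
          · simp
          · simp [snd_mul, hfst, op_smul_eq_smul, hm']
      · intro a hax ham
        have := mem_nonZeroDivisors_iff_right.1 h (inl a) ?_
        · simpa using congrArg fst this
        · ext
          · simp [fst_mul, hfst, hax]
          · simp [snd_mul, hsnd, op_smul_eq_smul, ham]
    · rintro ⟨h1, h2⟩
      refine mem_nonZeroDivisors_iff_right.2 fun z hz => ?_
      have hfz : z.fst * x = 0 := by
        have := congrArg fst hz; simpa [fst_mul, hfst] using this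
      have hsz : z.fst • m + x • z.snd = 0 := by
        have := congrArg snd hz
        simpa [snd_mul, hfst, hsnd, op_smul_eq_smul] using this
      have hx2 : x • (x • z.snd) = 0 := by
        have h' := congrArg (x • ·) hsz
        simp only [smul_add, smul_smul, smul_zero] at h'
        rw [mul_comm x z.fst, hfz, zero_smul, zero_add] at h'
        rwa [smul_smul]
      have hxz : x • z.snd = 0 := h1 _ hx2
      have hzm : z.fst • m = 0 := by rwa [hxz, add_zero] at hsz
      have hf0 : z.fst = 0 := h2 _ hfz hzm
      have hs0 : z.snd = 0 := h1 _ hxz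
      ext
      · simp [hf0]
      · simp [hs0]
  · rw [isUnit_iff_isUnit_fst, hfst]
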